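/- If c > δ > 0 and b = (c-δ)/(c+δ), then the trace of the Jacobian of the system ẋ = x(-x²+(1-b)x-y+b), ẏ = y((c-δ)x - δb) at the point (δ/(c+δ), c²/(c+δ)²) is zero, and the determinant is strictly positive, so the eigenvalues are purely imaginary and nonzero. -/
import Mathlib


/-- If c > δ > 0 and b = (c-δ)/(c+δ), then the trace of the Jacobian at
(δ/(c+δ), c²/(c+δ)²) is zero and the determinant is strictly positive, so
the eigenvalues are purely imaginary and nonzero. -/
theorem stmt11 (c δ : ℝ) (hδ : 0 < δ) (hcδ : δ < c)
    (b : ℝ) (hb : b = (c-δ)/(c+δ))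
    (P Q : ℝ → ℝ → ℝ)
    (hP : ∀ x y, P x y = x * (-x^2 + (1-b)*x - y + b))
    (hQ : ∀ x y, Q x y = y * ((c-δ)*x - δ*b))
    (x₂ y₂ : ℝ) (hx₂ : x₂ = δ/(c+δ)) (hy₂ : y₂ = c^2/(c+δ)^2)
    (J : Matrix (Fin 2) (Fin 2) ℝ)
    (hJ : J = !![deriv (fun x => P x y₂) x₂, deriv (fun y => P x₂ y) y₂;
                 deriv (fun x => Q x y₂) x₂, deriv (fun y => Q x₂ y) y₂]) :
    J.trace = 0 ∧ 0 < J.det ∧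
    ∀ z : ℂ, Module.End.HasEigenvalue
        (Matrix.toLin' (J.map (Complex.ofReal : ℝ → ℂ))) z →
      z.re = 0 ∧ z ≠ 0 := by
  have hcδ0 : (0:ℝ) < c + δ := by linarith
  have hcδ0' : c + δ ≠ 0 := ne_of_gt hcδ0
  -- derivative computations
  have hP1 : deriv (fun x => P x y₂) x₂ = -3*x₂^2 + 2*(1-b)*x₂ - y₂ + b := by
    have hfun : (fun x => P x y₂) = fun x => -x^3 + (1-b)*x^2 + (b - y₂)*x := by
      funext x; rw [hP]; ring
    rw [hfun]
    have H : HasDerivAt (fun x : ℝ => -x^3 + (1-b)*x^2 + (b - y₂)*x)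
        (-((3:ℕ) * x₂^2) + (1-b)*((2:ℕ)*x₂^1) + (b-y₂)*1) x₂ :=
      (((hasDerivAt_pow 3 x₂).neg).add (HasDerivAt.const_mul (1-b) (hasDerivAt_pow 2 x₂))).add
        (HasDerivAt.const_mul (b-y₂) (hasDerivAt_id x₂))
    rw [H.deriv]; push_cast; ring
  have hP2 : deriv (fun y => P x₂ y) y₂ = -x₂ := by
    have hfun : (fun y => P x₂ y) = fun y => (-x₂)*y + (x₂*(-x₂^2+(1-b)*x₂+b)) := by
      funext y; rw [hP]; ring
    rw [hfun]
    have H : HasDerivAt (fun y : ℝ => (-x₂)*y + (x₂*(-x₂^2+(1-b)*x₂+b))) ((-x₂)*1) y₂ :=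
      (HasDerivAt.const_mul (-x₂) (hasDerivAt_id y₂)).add_const _
    rw [H.deriv]; ring
  have hQ1 : deriv (fun x => Q x y₂) x₂ = y₂*(c-δ) := by
    have hfun : (fun x => Q x y₂) = fun x => (y₂*(c-δ))*x + (-(y₂*(δ*b))) := by
      funext x; rw [hQ]; ring
    rw [hfun]
    have H : HasDerivAt (fun x : ℝ => (y₂*(c-δ))*x + (-(y₂*(δ*b)))) ((y₂*(c-δ))*1) x₂ :=
      (HasDerivAt.const_mul (y₂*(c-δ)) (hasDerivAt_id x₂)).add_const _
    rw [H.deriv]; ring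
  have hQ2 : deriv (fun y => Q x₂ y) y₂ = (c-δ)*x₂ - δ*b := by
    have hfun : (fun y => Q x₂ y) = fun y => ((c-δ)*x₂ - δ*b)*y := by
      funext y; rw [hQ]; ring
    rw [hfun]
    have H : HasDerivAt (fun y : ℝ => ((c-δ)*x₂ - δ*b)*y) (((c-δ)*x₂ - δ*b)*1) y₂ :=
      HasDerivAt.const_mul _ (hasDerivAt_id y₂)
    rw [H.deriv]; ring
  have e11 : -3*x₂^2 + 2*(1-b)*x₂ - y₂ + b = 0 := by
    subst hb hx₂ hy₂; field_simp; ring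
  have e22 : (c-δ)*x₂ - δ*b = 0 := by
    subst hb hx₂; field_simp; ring
  have hJ' : J = !![0, -x₂; y₂*(c-δ), 0] := by
    rw [hJ, hP1, hP2, hQ1, hQ2, e11, e22]
  -- positivity of d
  have hx₂pos : 0 < x₂ := by rw [hx₂]; positivity
  have hy₂pos : 0 < y₂ := by
    rw [hy₂]
    have : (0:ℝ) < c := lt_trans hδ hcδ
    positivity
  have hdpos : 0 < x₂ * (y₂*(c-δ)) := by
    have : (0:ℝ) < c - δ := by linarith
    positivity
  refine ⟨?_, ?_, ?_⟩
  · rw [hJ', Matrix.trace_fin_two]; simp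
  · rw [hJ', Matrix.det_fin_two]; simp; nlinarith
  · intro z hz
    obtain ⟨v, hv⟩ := hz.exists_hasEigenvector
    have hmv : (Matrix.toLin' (J.map (Complex.ofReal : ℝ → ℂ))) v = z • v :=
      hv.apply_eq_smul
    have hvne := hv.right
    rw [Matrix.toLin'_apply, hJ'] at hmv
    have h0 := congrFun hmv 0
    have h1 := congrFun hmv 1
    simp [Matrix.mulVec, dotProduct, Fin.sum_univ_two, Matrix.map_apply] at h0 h1
    -- h0 : -x₂ * v 1 = z * v 0 (roughly), h1 : (y₂*(c-δ)) * v 0 = z * v 1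
    have key : z^2 = -(x₂ * (y₂*(c-δ)) : ℝ) := by
      have hz0 : z^2 * v 0 = (-(x₂ * (y₂*(c-δ)) : ℝ) : ℂ) * v 0 := by
        push_cast
        calc z^2 * v 0 = z * (z * v 0) := by ring
        _ = z * (-((x₂:ℂ) * v 1)) := by rw [← h0]
        _ = -(x₂:ℂ) * (z * v 1) := by ring
        _ = -(x₂:ℂ) * ((y₂:ℂ) * ((c:ℂ)-(δ:ℂ)) * v 0) := by rw [← h1]
        _ = -((x₂:ℂ) * ((y₂:ℂ)*((c:ℂ)-(δ:ℂ)))) * v 0 := by ring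
      have hz1 : z^2 * v 1 = (-(x₂ * (y₂*(c-δ)) : ℝ) : ℂ) * v 1 := by
        push_cast
        calc z^2 * v 1 = z * (z * v 1) := by ring
        _ = z * ((y₂:ℂ) * ((c:ℂ)-(δ:ℂ)) * v 0) := by rw [← h1]
        _ = (y₂:ℂ) * ((c:ℂ)-(δ:ℂ)) * (z * v 0) := by ring
        _ = (y₂:ℂ) * ((c:ℂ)-(δ:ℂ)) * (-((x₂:ℂ) * v 1)) := by rw [← h0]
        _ = -((x₂:ℂ) * ((y₂:ℂ)*((c:ℂ)-(δ:ℂ)))) * v 1 := by ring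
      have hvcase : v 0 ≠ 0 ∨ v 1 ≠ 0 := by
        by_contra hc
        push_neg at hc
        exact hvne (funext fun i => by fin_cases i <;> simp [hc.1, hc.2])
      rcases hvcase with h | h
      · exact mul_right_cancel₀ h (by rw [hz0])
      · exact mul_right_cancel₀ h (by rw [hz1])
    set d : ℝ := x₂ * (y₂*(c-δ)) with hd
    have hre : z.re^2 - z.im^2 = -d := by
      have := congrArg Complex.re key
      simpa [pow_two, Complex.mul_re] using this
    have him : z.re * z.im = 0 := by
      have := congrArg Complex.im key
      simp [pow_two, Complex.mul_im] at this
      linarith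
    constructor
    · by_contra hne
      have hzim : z.im = 0 := by
        rcases mul_eq_zero.mp him with h | h
        · exact absurd h hne
        · exact h
      rw [hzim] at hre
      nlinarith [sq_nonneg z.re]
    · intro h
      rw [h] at key
      have : (0:ℝ) = -d := by
        have := congrArg Complex.re key
        simpa using this
      linarith
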